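/- In the variable gadget for x ∈ X with the nodes t_{x,1}, t_{x,2} removed (withheld by the leader), the maximum total number of gadget nodes coverable by directed cycles of length at most 3 lying inside the gadget is 6, attained exactly by the two 3-cycles {α_{x,i}, β_{x,f,i}, f_{x,i}}, i = 1,2 (the consistent packing); and if additionally both β_{x,f,1} and β_{x,f,2} are excluded, the maximum is 2, attained by the 2-cycle {f_{x,1}, f_{x,2}}. -/

import Mathlib

variable {V : Type*} [DecidableEq V]

/-- A directed (simple) cycle given as a list of distinct vertices. -/
def IsDicycle (A : V → V → Prop) (c : List V) : Prop :=
  2 ≤ c.length ∧ c.Nodup ∧ c.Chain' A ∧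
    ∀ h : c ≠ [], A (c.getLast h) (c.head h)

def cycVerts (c : List V) : Set V := {v | v ∈ c}

/-- A `K`-cycle packing inside the vertex set `W`. -/
def IsCyclePackingOn (A : V → V → Prop) (K : ℕ) (W : Set V) (P : Finset (List V)) : Prop :=
  (∀ c ∈ P, IsDicycle A c ∧ c.length ≤ K ∧ ∀ v ∈ c, v ∈ W) ∧
  (P : Set (List V)).Pairwise fun c d => ∀ v, v ∈ c → v ∉ d

def packSize (P : Finset (List V)) : ℕ := ∑ c ∈ P, c.length

def pcovered (P : Finset (List V)) : Set V := {v | ∃ c ∈ P, v ∈ c}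

/-- Maximum size of a `K`-cycle packing on `G[W]`. -/
noncomputable def wDir (A : V → V → Prop) (K : ℕ) (W : Set V) : ℕ :=
  sSup {n | ∃ P, IsCyclePackingOn A K W P ∧ packSize P = n}

/-- Minimum number of `L`-nodes covered over all maximum `K`-cycle packings on `G[W]`. -/
noncomputable def wLDir (A : V → V → Prop) (K : ℕ) (L W : Set V) : ℕ :=
  sInf {k | ∃ P, IsCyclePackingOn A K W P ∧ packSize P = wDir A K W ∧
    (pcovered P ∩ L).ncard = k}

/-- The ten nodes of the variable gadget for `x ∈ X`. -/
inductive XV : Type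
  | t1 | t2 | f1 | f2 | al1 | al2 | bt1 | bt2 | bf1 | bf2
deriving DecidableEq

open XV in
instance : Fintype XV where
  elems := {t1, t2, f1, f2, al1, al2, bt1, bt2, bf1, bf2}
  complete := fun x => by cases x <;> simp

open XV in
/-- The arc set `A_x` of the `x`-gadget. -/
def xArc : XV → XV → Prop := fun u v =>
  (u, v) ∈ ({(al1, bt1), (bt1, t1), (t1, al1), (al2, bt2), (bt2, t2), (t2, al2),
             (al1, bf1), (bf1, f1), (f1, al1), (al2, bf2), (bf2, f2), (f2, al2),
             (t1, t2), (t2, t1), (f1, f2), (f2, f1)} : Set (XV × XV))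

/-- `P` contains a cycle whose vertex set is exactly `s`. -/
def hasCyc (P : Finset (List XV)) (s : Set XV) : Prop := ∃ c ∈ P, cycVerts c = s

open XV in
instance : DecidableRel xArc := fun u v =>
  decidable_of_iff ((u, v) ∈ ([(al1, bt1), (bt1, t1), (t1, al1), (al2, bt2), (bt2, t2), (t2, al2),
             (al1, bf1), (bf1, f1), (f1, al1), (al2, bf2), (bf2, f2), (f2, al2),
             (t1, t2), (t2, t1), (f1, f2), (f2, f1)] : List (XV × XV))) (by simp [xArc])

open XV

lemma two_case : ∀ a b : XV, xArc a b → xArc b a → a ≠ t1 → a ≠ t2 → b ≠ t1 → b ≠ t2 →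
    (a = f1 ∧ b = f2) ∨ (a = f2 ∧ b = f1) := by decide

lemma three_case : ∀ a b d : XV, xArc a b → xArc b d → xArc d a →
    a ≠ t1 → a ≠ t2 → b ≠ t1 → b ≠ t2 → d ≠ t1 → d ≠ t2 →
    (a = al1 ∧ b = bf1 ∧ d = f1) ∨ (a = bf1 ∧ b = f1 ∧ d = al1) ∨ (a = f1 ∧ b = al1 ∧ d = bf1) ∨
    (a = al2 ∧ b = bf2 ∧ d = f2) ∨ (a = bf2 ∧ b = f2 ∧ d = al2) ∨ (a = f2 ∧ b = al2 ∧ d = bf2) := by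
  decide

set_option synthInstance.maxSize 2000 in
lemma three_case' : ∀ a b d : XV, xArc a b → xArc b d → xArc d a →
    a ≠ t1 → a ≠ t2 → a ≠ bf1 → a ≠ bf2 → b ≠ t1 → b ≠ t2 → b ≠ bf1 → b ≠ bf2 →
    d ≠ t1 → d ≠ t2 → d ≠ bf1 → d ≠ bf2 → False := by decide

/-- classification for part 1 -/
lemma classify1 (c : List XV) (h : IsDicycle xArc c) (h3 : c.length ≤ 3)
    (hW : ∀ v ∈ c, v ≠ t1 ∧ v ≠ t2) :
    c.toFinset = ({f1, f2} : Finset XV) ∨ c.toFinset = ({al1, bf1, f1} : Finset XV) ∨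
      c.toFinset = ({al2, bf2, f2} : Finset XV) := by
  obtain ⟨h2, hnd, hch, hl⟩ := h
  match c with
  | [] => simp at h2
  | [a] => simp at h2
  | [a, b] =>
    have hab : xArc a b := by simpa [List.Chain', List.isChain_cons_cons] using hch
    have hba : xArc b a := by simpa using hl (by simp)
    obtain ⟨ha1, ha2⟩ := hW a (by simp)
    obtain ⟨hb1, hb2⟩ := hW b (by simp)
    rcases two_case a b hab hba ha1 ha2 hb1 hb2 with ⟨rfl, rfl⟩ | ⟨rfl, rfl⟩ <;> [left; left] <;> decide
  | [a, b, d] =>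
    have hab : xArc a b := by
      have := hch; simp [List.Chain', List.isChain_cons_cons] at this; exact this.1
    have hbd : xArc b d := by
      have := hch; simp [List.Chain', List.isChain_cons_cons] at this; exact this.2
    have hda : xArc d a := by simpa using hl (by simp)
    obtain ⟨ha1, ha2⟩ := hW a (by simp)
    obtain ⟨hb1, hb2⟩ := hW b (by simp)
    obtain ⟨hd1, hd2⟩ := hW d (by simp)
    rcases three_case a b d hab hbd hda ha1 ha2 hb1 hb2 hd1 hd2 with
      ⟨rfl, rfl, rfl⟩ | ⟨rfl, rfl, rfl⟩ | ⟨rfl, rfl, rfl⟩ | ⟨rfl, rfl, rfl⟩ | ⟨rfl, rfl, rfl⟩ |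
      ⟨rfl, rfl, rfl⟩ <;> [skip; skip; skip; right; right; right] <;>
      [right;right;right;right;right;right] <;> [left;left;left;skip;skip;skip] <;> decide
  | a :: b :: d :: e :: r => exfalso; simp only [List.length_cons] at h3; omega

lemma classify2 (c : List XV) (h : IsDicycle xArc c) (h3 : c.length ≤ 3)
    (hW : ∀ v ∈ c, v ≠ t1 ∧ v ≠ t2 ∧ v ≠ bf1 ∧ v ≠ bf2) :
    c.toFinset = ({f1, f2} : Finset XV) := by
  obtain ⟨h2, hnd, hch, hl⟩ := h
  match c with
  | [] => simp at h2
  | [a] => simp at h2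
  | [a, b] =>
    have hab : xArc a b := by simpa [List.Chain', List.isChain_cons_cons] using hch
    have hba : xArc b a := by simpa using hl (by simp)
    obtain ⟨ha1, ha2, -, -⟩ := hW a (by simp)
    obtain ⟨hb1, hb2, -, -⟩ := hW b (by simp)
    rcases two_case a b hab hba ha1 ha2 hb1 hb2 with ⟨rfl, rfl⟩ | ⟨rfl, rfl⟩ <;> decide
  | [a, b, d] =>
    have hab : xArc a b := by
      have := hch; simp [List.Chain', List.isChain_cons_cons] at this; exact this.1
    have hbd : xArc b d := by
      have := hch; simp [List.Chain', List.isChain_cons_cons] at this; exact this.2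
    have hda : xArc d a := by simpa using hl (by simp)
    obtain ⟨ha1, ha2, ha3, ha4⟩ := hW a (by simp)
    obtain ⟨hb1, hb2, hb3, hb4⟩ := hW b (by simp)
    obtain ⟨hd1, hd2, hd3, hd4⟩ := hW d (by simp)
    exact absurd (three_case' a b d hab hbd hda ha1 ha2 ha3 ha4 hb1 hb2 hb3 hb4 hd1 hd2 hd3 hd4) id
  | a :: b :: d :: e :: r => exfalso; simp only [List.length_cons] at h3; omega

lemma packSize_eq_card {W : Set XV} {P : Finset (List XV)}
    (hP : IsCyclePackingOn xArc 3 W P) :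
    packSize P = (P.biUnion List.toFinset).card := by
  rw [Finset.card_biUnion]
  · exact Finset.sum_congr rfl fun c hc =>
      (List.toFinset_card_of_nodup ((hP.1 c hc).1.2.1)).symm
  · intro c hc d hd hne
    rw [Function.onFun, Finset.disjoint_left]
    intro v hv
    simp only [List.mem_toFinset] at *
    exact fun hvd => hP.2 hc hd hne v hv hvd

lemma cycVerts_eq_iff (c : List XV) (F : Finset XV) (S : Set XV)
    (hFS : ∀ v, v ∈ F ↔ v ∈ S) : cycVerts c = S ↔ c.toFinset = F := by
  simp only [Set.ext_iff, Finset.ext_iff, List.mem_toFinset, cycVerts, Set.mem_setOf_eq]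
  exact forall_congr' fun v => by rw [hFS v]

def P1 : Finset (List XV) := {[al1, bf1, f1], [al2, bf2, f2]}
def P2 : Finset (List XV) := {[f1, f2]}

lemma hP1 : IsCyclePackingOn xArc 3 ({t1, t2}ᶜ : Set XV) P1 := by
  constructor
  · intro c hc
    simp only [P1, Finset.mem_insert, Finset.mem_singleton] at hc
    rcases hc with rfl | rfl <;>
      [refine ⟨⟨by decide, by decide,
        by simp only [List.Chain', List.isChain_cons_cons, List.isChain_singleton, and_true]; exact ⟨by decide, by decide⟩,
        fun _ => show xArc f1 al1 by decide⟩, by decide, ?_⟩;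
       refine ⟨⟨by decide, by decide,
        by simp only [List.Chain', List.isChain_cons_cons, List.isChain_singleton, and_true]; exact ⟨by decide, by decide⟩,
        fun _ => show xArc f2 al2 by decide⟩, by decide, ?_⟩] <;>
      · intro v hv
        simp only [List.mem_cons, List.not_mem_nil, or_false] at hv
        rcases hv with rfl | rfl | rfl <;> simp
  · intro c hc d hd hne
    simp only [P1, Finset.coe_insert, Set.mem_insert_iff, Finset.coe_singleton,
      Set.mem_singleton_iff] at hc hd
    rcases hc with rfl | rfl <;> rcases hd with rfl | rfl <;>
      first | exact absurd rfl hne | decide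

lemma hP2 : IsCyclePackingOn xArc 3 ({t1, t2, bf1, bf2}ᶜ : Set XV) P2 := by
  constructor
  · intro c hc
    simp only [P2, Finset.mem_singleton] at hc
    subst hc
    refine ⟨⟨by decide, by decide,
      by simp only [List.Chain', List.isChain_cons_cons, List.isChain_singleton]; decide,
      fun _ => show xArc f2 f1 by decide⟩, by decide, ?_⟩
    intro v hv
    simp only [List.mem_cons, List.not_mem_nil, or_false] at hv
    rcases hv with rfl | rfl <;> simp
  · intro c hc d hd hne
    simp only [P2, Finset.coe_singleton, Set.mem_singleton_iff] at hc hd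
    subst hc; subst hd; exact absurd rfl hne

lemma packSize_P1 : packSize P1 = 6 := by decide
lemma packSize_P2 : packSize P2 = 2 := by decide

lemma bound1 {P : Finset (List XV)} (hP : IsCyclePackingOn xArc 3 ({t1, t2}ᶜ : Set XV) P) :
    packSize P ≤ 6 := by
  rw [packSize_eq_card hP]
  have hsub : P.biUnion List.toFinset ⊆ ({f1, f2, al1, bf1, al2, bf2} : Finset XV) := by
    intro v hv
    simp only [Finset.mem_biUnion, List.mem_toFinset] at hv
    obtain ⟨c, hc, hvc⟩ := hv
    obtain ⟨hd, hl, hm⟩ := hP.1 c hc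
    have := classify1 c hd hl (fun v hv => by simpa using hm v hv)
    have hvc' : v ∈ c.toFinset := List.mem_toFinset.mpr hvc
    rcases this with h | h | h <;> rw [h] at hvc' <;>
      exact Finset.mem_of_subset (by decide) hvc'
  calc (P.biUnion List.toFinset).card ≤ _ := Finset.card_le_card hsub
    _ = 6 := by decide

lemma bound2 {P : Finset (List XV)}
    (hP : IsCyclePackingOn xArc 3 ({t1, t2, bf1, bf2}ᶜ : Set XV) P) :
    packSize P ≤ 2 := by
  rw [packSize_eq_card hP]
  have hsub : P.biUnion List.toFinset ⊆ ({f1, f2} : Finset XV) := by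
    intro v hv
    simp only [Finset.mem_biUnion, List.mem_toFinset] at hv
    obtain ⟨c, hc, hvc⟩ := hv
    obtain ⟨hd, hl, hm⟩ := hP.1 c hc
    have := classify2 c hd hl (fun v hv => by simpa using hm v hv)
    have hvc' : v ∈ c.toFinset := List.mem_toFinset.mpr hvc
    rw [this] at hvc'; exact hvc'
  calc (P.biUnion List.toFinset).card ≤ _ := Finset.card_le_card hsub
    _ = 2 := by decide

open XV in
/-- with `t_{x,1}, t_{x,2}` withheld, the maximum 3-cycle packing in the
`x`-gadget covers 6 nodes, attained exactly by the consistent packing consisting of the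
two triangles `{α_i, β_{f,i}, f_i}`; with `β_{f,1}, β_{f,2}` also excluded, the maximum
is 2, attained exactly by the 2-cycle `{f_1, f_2}`. -/
theorem stmt7 :
    wDir xArc 3 ({t1, t2}ᶜ : Set XV) = 6 ∧
    (∀ P, IsCyclePackingOn xArc 3 ({t1, t2}ᶜ : Set XV) P → packSize P = 6 →
      hasCyc P {al1, bf1, f1} ∧ hasCyc P {al2, bf2, f2}) ∧
    wDir xArc 3 ({t1, t2, bf1, bf2}ᶜ : Set XV) = 2 ∧
    (∀ P, IsCyclePackingOn xArc 3 ({t1, t2, bf1, bf2}ᶜ : Set XV) P → packSize P = 2 →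
      hasCyc P {f1, f2}) := by
  refine ⟨?_, ?_, ?_, ?_⟩
  · have h6 : (6 : ℕ) ∈ {n | ∃ P, IsCyclePackingOn xArc 3 ({t1, t2}ᶜ : Set XV) P ∧
        packSize P = n} := ⟨P1, hP1, packSize_P1⟩
    have hub : ∀ n ∈ {n | ∃ P, IsCyclePackingOn xArc 3 ({t1, t2}ᶜ : Set XV) P ∧
        packSize P = n}, n ≤ 6 := by
      rintro n ⟨P, hP, rfl⟩; exact bound1 hP
    exact le_antisymm (csSup_le ⟨6, h6⟩ hub) (le_csSup ⟨6, hub⟩ h6)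
  · intro P hP hsize
    have key : ∀ F : Finset XV, F = ({al1, bf1, f1} : Finset XV) ∨ F = ({al2, bf2, f2} : Finset XV) →
        (∀ c ∈ P, c.toFinset ≠ F) → False := by
      intro F hF hno
      have hsub : P.biUnion List.toFinset ⊆ ({f1, f2, al1, bf1, al2, bf2} : Finset XV) \ F ∪
          ({f1, f2} : Finset XV) := by
        intro v hv
        simp only [Finset.mem_biUnion, List.mem_toFinset] at hv
        obtain ⟨c, hc, hvc⟩ := hv
        obtain ⟨hd, hl, hm⟩ := hP.1 c hc
        have hcl := classify1 c hd hl (fun v hv => by simpa using hm v hv)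
        have hvc' : v ∈ c.toFinset := List.mem_toFinset.mpr hvc
        rcases hcl with h | h | h <;> rw [h] at hvc'
        · exact Finset.mem_union_right _ hvc'
        · rcases hF with rfl | rfl
          · exact absurd h (hno c hc)
          · rw [Finset.mem_union, Finset.mem_sdiff]
            exact Or.inl ⟨Finset.mem_of_subset (by decide) hvc',
              Finset.disjoint_left.mp (by decide) hvc'⟩
        · rcases hF with rfl | rfl
          · rw [Finset.mem_union, Finset.mem_sdiff]
            exact Or.inl ⟨Finset.mem_of_subset (by decide) hvc',
              Finset.disjoint_left.mp (by decide) hvc'⟩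
          · exact absurd h (hno c hc)
      have hcard : packSize P ≤ (({f1, f2, al1, bf1, al2, bf2} : Finset XV) \ F ∪
          ({f1, f2} : Finset XV)).card := by
        rw [packSize_eq_card hP]; exact Finset.card_le_card hsub
      rcases hF with rfl | rfl <;> rw [hsize] at hcard <;> revert hcard <;> decide
    constructor
    · by_contra hno
      refine key ({al1, bf1, f1} : Finset XV) (Or.inl rfl) ?_
      intro c hc hEq
      exact hno ⟨c, hc, (cycVerts_eq_iff c _ _ (by intro v; simp)).mpr hEq⟩
    · by_contra hno
      refine key ({al2, bf2, f2} : Finset XV) (Or.inr rfl) ?_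
      intro c hc hEq
      exact hno ⟨c, hc, (cycVerts_eq_iff c _ _ (by intro v; simp)).mpr hEq⟩
  · have h2 : (2 : ℕ) ∈ {n | ∃ P, IsCyclePackingOn xArc 3 ({t1, t2, bf1, bf2}ᶜ : Set XV) P ∧
        packSize P = n} := ⟨P2, hP2, packSize_P2⟩
    have hub : ∀ n ∈ {n | ∃ P, IsCyclePackingOn xArc 3 ({t1, t2, bf1, bf2}ᶜ : Set XV) P ∧
        packSize P = n}, n ≤ 2 := by
      rintro n ⟨P, hP, rfl⟩; exact bound2 hP
    exact le_antisymm (csSup_le ⟨2, h2⟩ hub) (le_csSup ⟨2, hub⟩ h2)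
  · intro P hP hsize
    have hne : P.Nonempty := by
      rcases Finset.eq_empty_or_nonempty P with rfl | h
      · simp [packSize] at hsize
      · exact h
    obtain ⟨c, hc⟩ := hne
    obtain ⟨hd, hl, hm⟩ := hP.1 c hc
    have := classify2 c hd hl (fun v hv => by simpa using hm v hv)
    exact ⟨c, hc, (cycVerts_eq_iff c _ _ (by intro v; simp)).mpr this⟩
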